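/- Fix integers n ≥ 3 and k with 3 ≤ k ≤ n, and reals d > 0, r > 0, λ with d(1+rλ)/n, d(1−λ)/n, d(1+λ/r)/n all in [0,1]. Consider the random graph G on vertex set {1,…,n} generated as follows: labels σ_u ∈ {0,1}, u = 1,…,n, are i.i.d. with P(σ_u = 0) = 1/(1+r) and P(σ_u = 1) = r/(1+r); conditionally on the labels, the edge indicators X_{uv} for u < v are independent Bernoulli with parameter α_{σ_u σ_v}/n, where α₀₀ = d(1+rλ), α₀₁ = α₁₀ = d(1−λ), α₁₁ = d(1+λ/r). Let C_k be the number of cycles of length k in G, i.e., C_k = (1/(2k))·Σ over injective maps u : ℤ/kℤ → {1,…,n} of ∏_{i=0}^{k−1} X_{u(i)u(i+1)}. Then E[C_k] = binom(n,k)·(k−1)!/2 · (d/n)^k · (1 + λ^k). -/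

import Mathlib

noncomputable section

open Finset

/-- The `{0,1}`-valued edge indicator `X_{uv}` (as a real number) read off
from the family `ω` of edge indicators indexed by ordered pairs `u < v`. -/
def edgeInd {n : ℕ} (ω : {p : Fin n × Fin n // p.1 < p.2} → Bool)
    (u v : Fin n) : ℝ :=
  if h : u < v then (if ω ⟨(u, v), h⟩ then 1 else 0)
  else if h' : v < u then (if ω ⟨(v, u), h'⟩ then 1 else 0)
  else 0

namespace SBMAux

lemma castSucc_add_one' {m : ℕ} (i : Fin m) : (i.castSucc + 1 : Fin (m+1)) = i.succ := by
  ext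
  simp [Fin.add_def, Fin.val_succ, Nat.mod_eq_of_lt (by omega : (i:ℕ)+1 < m+1)]

lemma last_add_one' (m : ℕ) : (Fin.last m + 1 : Fin (m+1)) = 0 := by
  ext; simp [Fin.add_def]

variable {S : Type*} [Fintype S] [DecidableEq S]

lemma key (M : Matrix S S ℝ) : ∀ (m : ℕ) (g : S → S → ℝ),
    ∑ τ : Fin (m+1) → S, (∏ i : Fin m, M (τ i.castSucc) (τ i.succ)) * g (τ 0) (τ (Fin.last m))
      = ∑ a, ∑ b, (M ^ m) a b * g a b := by
  intro m
  induction m with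
  | zero =>
    intro g
    rw [Fintype.sum_equiv (Equiv.funUnique (Fin 1) S) _ (fun a => g a a)]
    · simp [Matrix.one_apply]
    · intro τ; simp [Fin.last]
  | succ m ih =>
    intro g
    rw [← (Fin.consEquiv (fun _ : Fin (m+2) => S)).sum_comp]
    rw [Fintype.sum_prod_type]
    simp only [Fin.consEquiv_apply]
    have : ∀ a : S, ∑ σ : Fin (m+1) → S,
        (∏ i : Fin (m+1), M ((Fin.cons a σ : Fin (m+2) → S) i.castSucc) ((Fin.cons a σ : Fin (m+2) → S) i.succ)) *
          g ((Fin.cons a σ : Fin (m+2) → S) 0) ((Fin.cons a σ : Fin (m+2) → S) (Fin.last (m+1)))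
        = ∑ b, ∑ c, (M ^ m) b c * (M a b * g a c) := by
      intro a
      rw [← ih (fun b c => M a b * g a c)]
      apply Finset.sum_congr rfl
      intro σ _
      rw [Fin.prod_univ_succ]
      have hlast : (Fin.cons a σ : Fin (m+2) → S) (Fin.last (m+1)) = σ (Fin.last m) := by
        rw [← Fin.succ_last, Fin.cons_succ]
      have hsucc : ∀ i : Fin m, (Fin.cons a σ : Fin (m+2) → S) i.succ.castSucc = σ i.castSucc := by
        intro i; rw [← Fin.succ_castSucc, Fin.cons_succ]
      simp only [hlast, hsucc, Fin.cons_succ, Fin.cons_zero, Fin.castSucc_zero]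
      ring
    simp only [this]
    have hpow : ∀ a c : S, (M ^ (m+1)) a c = ∑ b, M a b * (M ^ m) b c := by
      intro a c; rw [pow_succ', Matrix.mul_apply]
    simp_rw [hpow, Finset.sum_mul]
    apply Finset.sum_congr rfl
    intro a _
    rw [Finset.sum_comm]
    apply Finset.sum_congr rfl
    intro c _
    apply Finset.sum_congr rfl
    intro b _
    ring

lemma cyc (M : Matrix S S ℝ) (m : ℕ) :
    ∑ τ : Fin (m+1) → S, ∏ i : Fin (m+1), M (τ i) (τ (i + 1))
      = Matrix.trace (M ^ (m+1)) := by
  have h : ∀ τ : Fin (m+1) → S, ∏ i : Fin (m+1), M (τ i) (τ (i + 1))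
      = (∏ i : Fin m, M (τ i.castSucc) (τ i.succ)) * M (τ (Fin.last m)) (τ 0) := by
    intro τ
    rw [Fin.prod_univ_castSucc]
    congr 2
    · funext i
      rw [castSucc_add_one']
    · rw [last_add_one']
  simp_rw [h]
  rw [key M m (fun a b => M b a)]
  rw [Matrix.trace, pow_succ]
  apply Finset.sum_congr rfl
  intro a _
  rw [Matrix.diag, Matrix.mul_apply]

lemma projPow (a b : ℝ) (A : Matrix (Fin 2) (Fin 2) ℝ) (hA : A * A = A) (k : ℕ) :
    (b • (1 : Matrix (Fin 2) (Fin 2) ℝ) + (a - b) • A) ^ k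
      = b ^ k • (1 : Matrix (Fin 2) (Fin 2) ℝ) + (a ^ k - b ^ k) • A := by
  induction k with
  | zero => simp
  | succ k ih =>
    rw [pow_succ, ih]
    simp only [add_mul, mul_add, Matrix.smul_mul, Matrix.mul_smul, one_mul, mul_one, hA,
      smul_smul]
    rw [add_assoc, ← add_smul]
    congr 1
    · congr 1; ring
    · rw [← add_smul]; congr 1; ring

lemma traceComp (nr d r lam : ℝ) (hr : 0 < r) (hn : nr ≠ 0)
    (π : Fin 2 → ℝ) (hπ : π = ![1 / (1 + r), r / (1 + r)])
    (α : Fin 2 → Fin 2 → ℝ)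
    (hα : α = ![![d * (1 + r * lam), d * (1 - lam)],
                ![d * (1 - lam), d * (1 + lam / r)]]) (k : ℕ) :
    Matrix.trace ((Matrix.of fun b c => π b * α b c / nr) ^ k)
      = (d / nr) ^ k + (d * lam / nr) ^ k := by
  have hr1 : (1 : ℝ) + r ≠ 0 := by positivity
  set A : Matrix (Fin 2) (Fin 2) ℝ :=
    !![1/(1+r), 1/(1+r); r/(1+r), r/(1+r)] with hA_def
  have hA : A * A = A := by
    ext i j
    fin_cases i <;> fin_cases j <;>
      simp [hA_def, Matrix.mul_apply, Fin.sum_univ_two] <;> field_simp <;> ring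
  have hM : (Matrix.of fun b c => π b * α b c / nr)
      = (d * lam / nr) • (1 : Matrix (Fin 2) (Fin 2) ℝ) + (d / nr - d * lam / nr) • A := by
    ext i j
    fin_cases i <;> fin_cases j <;>
      · simp [hA_def, hπ, hα, Matrix.one_apply]
        field_simp
        all_goals ring
  rw [hM, projPow _ _ _ hA, Matrix.trace_add, Matrix.trace_smul, Matrix.trace_smul,
    Matrix.trace_one, hA_def]
  have : Matrix.trace !![1/(1+r), 1/(1+r); r/(1+r), r/(1+r)] = 1 := by
    simp [Matrix.trace_fin_two]
    field_simp
  rw [this]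
  simp only [smul_eq_mul, Fintype.card_fin, Nat.cast_ofNat, mul_one]
  ring

variable {n k : ℕ} [NeZero k]

/-- the sorted edge of step `i` of the cycle -/
def cedge (u : Fin k → Fin n) (hne : ∀ i : Fin k, u i ≠ u (i + 1)) (i : Fin k) :
    {p : Fin n × Fin n // p.1 < p.2} :=
  if h : u i < u (i + 1) then ⟨(u i, u (i + 1)), h⟩
  else ⟨(u (i + 1), u i), lt_of_le_of_ne (not_lt.mp h) (hne i).symm⟩

lemma one_ne_zero_fin (hk3 : 3 ≤ k) : (1 : Fin k) ≠ 0 := by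
  intro h
  have := congrArg Fin.val h
  rw [Fin.val_one', Fin.val_zero, Nat.mod_eq_of_lt (by omega)] at this
  omega

lemma finSuccNeSelf (hk3 : 3 ≤ k) (i : Fin k) : i + 1 ≠ i := by
  intro h
  have : (1 : Fin k) = 0 := by
    have := congrArg (fun x => x - i) h
    simpa [add_comm, add_sub_cancel_right, sub_self] using this
  exact one_ne_zero_fin hk3 this

lemma two_ne_zero_fin (hk3 : 3 ≤ k) : (2 : Fin k) ≠ 0 := by
  intro h
  have := congrArg Fin.val h
  have h2 : ((2 : Fin k) : ℕ) = 2 % k := by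
    simp
  rw [h2, Nat.mod_eq_of_lt (by omega), Fin.val_zero] at this
  omega

lemma cedge_inj (hk3 : 3 ≤ k) (u : Fin k → Fin n) (hu : Function.Injective u)
    (hne : ∀ i : Fin k, u i ≠ u (i + 1)) : Function.Injective (cedge u hne) := by
  intro i j hij
  unfold cedge at hij
  have pair : (u i = u j ∧ u (i+1) = u (j+1)) ∨ (u i = u (j+1) ∧ u (i+1) = u j) := by
    split_ifs at hij with h1 h2 h2 <;>
      · simp only [Subtype.mk.injEq, Prod.mk.injEq] at hij
        tauto
  rcases pair with ⟨h1, _⟩ | ⟨h1, h2⟩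
  · exact hu h1
  · exfalso
    have e1 : i = j + 1 := hu h1
    have e2 : i + 1 = j := hu h2
    have : i = i + 2 := by
      calc i = j + 1 := e1
      _ = (i + 1) + 1 := by rw [e2]
      _ = i + 2 := by ext; simp [Fin.val_add]
    have h20 : (2 : Fin k) = 0 := by
      have := congrArg (fun x => x - i) this
      simpa [add_comm, add_sub_cancel_right, sub_self] using this.symm
    exact two_ne_zero_fin hk3 h20

lemma edgeInd_eq (ω : {p : Fin n × Fin n // p.1 < p.2} → Bool)
    (u : Fin k → Fin n) (hne : ∀ i : Fin k, u i ≠ u (i + 1)) (i : Fin k) :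
    edgeInd ω (u i) (u (i + 1)) = if ω (cedge u hne i) then 1 else 0 := by
  unfold edgeInd cedge
  rcases lt_or_gt_of_ne (hne i) with h | h
  · rw [dif_pos h, dif_pos h]
  · rw [dif_neg (by omega), dif_pos h, dif_neg (not_lt.mpr h.le)]

lemma inner_exp (hk3 : 3 ≤ k) (u : Fin k → Fin n) (hu : Function.Injective u)
    (β : Fin n → Fin n → ℝ) (hβ : ∀ x y, β x y = β y x) :
    ∑ ω : {p : Fin n × Fin n // p.1 < p.2} → Bool,
      (∏ p : {p : Fin n × Fin n // p.1 < p.2},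
        (if ω p then β p.1.1 p.1.2 else 1 - β p.1.1 p.1.2)) *
      ∏ i : Fin k, edgeInd ω (u i) (u (i + 1))
      = ∏ i : Fin k, β (u i) (u (i + 1)) := by
  classical
  have hne : ∀ i : Fin k, u i ≠ u (i + 1) := fun i h =>
    finSuccNeSelf hk3 i (hu h.symm)
  set E : Finset {p : Fin n × Fin n // p.1 < p.2} := Finset.image (cedge u hne) univ with hE
  have step1 : ∀ ω : {p : Fin n × Fin n // p.1 < p.2} → Bool,
      ∏ i : Fin k, edgeInd ω (u i) (u (i + 1))
        = ∏ p : {p : Fin n × Fin n // p.1 < p.2},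
            (if p ∈ E then (if ω p then (1:ℝ) else 0) else 1) := by
    intro ω
    rw [Finset.prod_ite_mem, univ_inter, hE,
      Finset.prod_image (fun i _ j _ h => cedge_inj hk3 u hu hne h)]
    exact Finset.prod_congr rfl fun i _ => edgeInd_eq ω u hne i
  calc ∑ ω : {p : Fin n × Fin n // p.1 < p.2} → Bool,
      (∏ p : {p : Fin n × Fin n // p.1 < p.2},
        (if ω p then β p.1.1 p.1.2 else 1 - β p.1.1 p.1.2)) *
      ∏ i : Fin k, edgeInd ω (u i) (u (i + 1))
      = ∑ ω : {p : Fin n × Fin n // p.1 < p.2} → Bool,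
          ∏ p : {p : Fin n × Fin n // p.1 < p.2},
            ((if ω p then β p.1.1 p.1.2 else 1 - β p.1.1 p.1.2) *
              (if p ∈ E then (if ω p then (1:ℝ) else 0) else 1)) := by
        apply Finset.sum_congr rfl
        intro ω _
        rw [step1 ω, ← Finset.prod_mul_distrib]
    _ = ∏ p : {p : Fin n × Fin n // p.1 < p.2},
          ∑ b : Bool, ((if b then β p.1.1 p.1.2 else 1 - β p.1.1 p.1.2) *
              (if p ∈ E then (if b then (1:ℝ) else 0) else 1)) := by
        rw [Fintype.prod_sum]
    _ = ∏ p : {p : Fin n × Fin n // p.1 < p.2},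
          (if p ∈ E then β p.1.1 p.1.2 else 1) := by
        apply Finset.prod_congr rfl
        intro p _
        rw [Fintype.sum_bool]
        by_cases h : p ∈ E <;> simp [h] <;> ring
    _ = ∏ p ∈ E, β p.1.1 p.1.2 := by rw [Finset.prod_ite_mem, univ_inter]
    _ = ∏ i : Fin k, β (u i) (u (i + 1)) := by
        rw [hE, Finset.prod_image (fun i _ j _ h => cedge_inj hk3 u hu hne h)]
        apply Finset.prod_congr rfl
        intro i _
        unfold cedge
        split_ifs with h
        · rfl
        · exact (hβ _ _)

lemma label_sum {n k : ℕ} (u : Fin k → Fin n) (hu : Function.Injective u)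
    (π : Fin 2 → ℝ) (hπ1 : π 0 + π 1 = 1) (F : (Fin k → Fin 2) → ℝ) :
    ∑ σ : Fin n → Fin 2, (∏ v : Fin n, π (σ v)) * F (σ ∘ u)
      = ∑ τ : Fin k → Fin 2, (∏ i : Fin k, π (τ i)) * F τ := by
  classical
  let eV : Fin k ⊕ ↥(Set.range u)ᶜ ≃ Fin n :=
    ((Equiv.ofInjective u hu).sumCongr (Equiv.refl _)).trans (Equiv.Set.sumCompl _)
  have heV : ∀ i : Fin k, eV (Sum.inl i) = u i := fun i => rfl
  let Ψ : (Fin k ⊕ ↥(Set.range u)ᶜ → Fin 2) ≃ (Fin n → Fin 2) :=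
    Equiv.arrowCongr eV (Equiv.refl _)
  rw [← Ψ.sum_comp, ← (Equiv.sumArrowEquivProdArrow (Fin k) _ (Fin 2)).symm.sum_comp,
    Fintype.sum_prod_type]
  have hterm : ∀ (τ : Fin k → Fin 2) (ρ : ↥(Set.range u)ᶜ → Fin 2),
      (∏ v : Fin n, π ((Ψ ((Equiv.sumArrowEquivProdArrow (Fin k) _ (Fin 2)).symm (τ, ρ))) v)) *
        F ((Ψ ((Equiv.sumArrowEquivProdArrow (Fin k) _ (Fin 2)).symm (τ, ρ))) ∘ u)
      = ((∏ i : Fin k, π (τ i)) * ∏ c : ↥(Set.range u)ᶜ, π (ρ c)) * F τ := by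
    intro τ ρ
    set σ' : Fin n → Fin 2 :=
      Ψ ((Equiv.sumArrowEquivProdArrow (Fin k) _ (Fin 2)).symm (τ, ρ)) with hσ'
    have hσ'x : ∀ x, σ' (eV x) = Sum.elim τ ρ x := by
      intro x
      simp [hσ', Ψ, Equiv.arrowCongr, Equiv.sumArrowEquivProdArrow]
    have hcomp : σ' ∘ u = τ := by
      funext i
      have := hσ'x (Sum.inl i)
      rw [heV i] at this
      simpa using this
    rw [hcomp]
    congr 1
    rw [← Equiv.prod_comp eV (fun v => π (σ' v))]
    rw [Fintype.prod_sum_type]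
    congr 1
    · exact Finset.prod_congr rfl fun i _ => by rw [hσ'x (Sum.inl i)]; rfl
    · exact Finset.prod_congr rfl fun c _ => by rw [hσ'x (Sum.inr c)]; rfl
  simp_rw [hterm]
  have hone : ∑ ρ : ↥(Set.range u)ᶜ → Fin 2, ∏ c : ↥(Set.range u)ᶜ, π (ρ c) = 1 := by
    rw [← Fintype.prod_sum (fun (_ : ↥(Set.range u)ᶜ) (b : Fin 2) => π b)]
    rw [Finset.prod_congr rfl fun c _ => by rw [Fin.sum_univ_two, hπ1]]
    exact Finset.prod_const_one
  calc ∑ τ : Fin k → Fin 2, ∑ ρ : ↥(Set.range u)ᶜ → Fin 2,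
        ((∏ i : Fin k, π (τ i)) * ∏ c : ↥(Set.range u)ᶜ, π (ρ c)) * F τ
      = ∑ τ : Fin k → Fin 2, ((∏ i : Fin k, π (τ i)) * F τ) *
          ∑ ρ : ↥(Set.range u)ᶜ → Fin 2, ∏ c : ↥(Set.range u)ᶜ, π (ρ c) := by
        apply Finset.sum_congr rfl
        intro τ _
        rw [Finset.mul_sum]
        apply Finset.sum_congr rfl
        intro ρ _
        ring
    _ = _ := by rw [hone]; simp

end SBMAux

open SBMAux in
theorem stmt17 (n k : ℕ) [NeZero k] (hn : 3 ≤ n) (hk3 : 3 ≤ k) (hkn : k ≤ n)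
    (d r lam : ℝ) (hd : 0 < d) (hr : 0 < r)
    (h00 : d * (1 + r * lam) / n ∈ Set.Icc (0 : ℝ) 1)
    (h01 : d * (1 - lam) / n ∈ Set.Icc (0 : ℝ) 1)
    (h11 : d * (1 + lam / r) / n ∈ Set.Icc (0 : ℝ) 1)
    (π : Fin 2 → ℝ) (hπ : π = ![1 / (1 + r), r / (1 + r)])
    (α : Fin 2 → Fin 2 → ℝ)
    (hα : α = ![![d * (1 + r * lam), d * (1 - lam)],
                ![d * (1 - lam), d * (1 + lam / r)]]) :
    ∑ σ : Fin n → Fin 2, ∑ ω : {p : Fin n × Fin n // p.1 < p.2} → Bool,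
      ((∏ u : Fin n, π (σ u)) *
        ∏ p : {p : Fin n × Fin n // p.1 < p.2},
          (if ω p then α (σ p.1.1) (σ p.1.2) / n
           else 1 - α (σ p.1.1) (σ p.1.2) / n)) *
      (1 / (2 * (k : ℝ)) *
        ∑ u ∈ Finset.univ.filter (fun u : Fin k → Fin n => Function.Injective u),
          ∏ i : Fin k, edgeInd ω (u i) (u (i + 1)))
      = (n.choose k : ℝ) * ((k - 1).factorial : ℝ) / 2 * (d / n) ^ k *
          (1 + lam ^ k) := by
  classical
  have hnR : (n : ℝ) ≠ 0 := by positivity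
  have hr1 : (1 : ℝ) + r ≠ 0 := by positivity
  have hπ1 : π 0 + π 1 = 1 := by
    rw [hπ]; simp; field_simp
  have hsymα : ∀ a b : Fin 2, α a b = α b a := by
    intro a b; fin_cases a <;> fin_cases b <;> simp [hα]
  -- value of the inner double expectation for a fixed injective u
  have main : ∀ u : Fin k → Fin n, Function.Injective u →
      ∑ σ : Fin n → Fin 2, (∏ v : Fin n, π (σ v)) *
        ∑ ω : {p : Fin n × Fin n // p.1 < p.2} → Bool,
          (∏ p : {p : Fin n × Fin n // p.1 < p.2},
            (if ω p then α (σ p.1.1) (σ p.1.2) / n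
             else 1 - α (σ p.1.1) (σ p.1.2) / n)) *
          ∏ i : Fin k, edgeInd ω (u i) (u (i + 1))
      = (d / n) ^ k * (1 + lam ^ k) := by
    intro u hu
    have hin : ∀ σ : Fin n → Fin 2,
        ∑ ω : {p : Fin n × Fin n // p.1 < p.2} → Bool,
          (∏ p : {p : Fin n × Fin n // p.1 < p.2},
            (if ω p then α (σ p.1.1) (σ p.1.2) / n
             else 1 - α (σ p.1.1) (σ p.1.2) / n)) *
          ∏ i : Fin k, edgeInd ω (u i) (u (i + 1))
        = ∏ i : Fin k, α (σ (u i)) (σ (u (i + 1))) / n := by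
      intro σ
      exact inner_exp hk3 u hu (fun x y => α (σ x) (σ y) / n)
        (fun x y => by show α (σ x) (σ y) / (n:ℝ) = α (σ y) (σ x) / (n:ℝ); rw [hsymα])
    simp_rw [hin]
    have := label_sum u hu π hπ1 (fun τ => ∏ i : Fin k, α (τ i) (τ (i + 1)) / (n:ℝ))
    simp only [Function.comp_apply] at this
    rw [this]
    -- now a trace computation
    obtain ⟨m, rfl⟩ : ∃ m, k = m + 1 := ⟨k - 1, by omega⟩
    have hprod : ∀ τ : Fin (m+1) → Fin 2,
        (∏ i : Fin (m+1), π (τ i)) * ∏ i : Fin (m+1), α (τ i) (τ (i + 1)) / (n:ℝ)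
          = ∏ i : Fin (m+1), (Matrix.of fun b c => π b * α b c / (n:ℝ)) (τ i) (τ (i + 1)) := by
      intro τ
      rw [← Finset.prod_mul_distrib]
      exact Finset.prod_congr rfl fun i _ => by
        simp [Matrix.of_apply, mul_div_assoc]
    simp_rw [hprod]
    rw [cyc, traceComp (n:ℝ) d r lam hr hnR π hπ α hα]
    rw [show d * lam / (n:ℝ) = (d / n) * lam by ring, mul_pow]
    ring
  -- rearrange the global sum
  have swap : ∑ σ : Fin n → Fin 2, ∑ ω : {p : Fin n × Fin n // p.1 < p.2} → Bool,
      ((∏ u : Fin n, π (σ u)) *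
        ∏ p : {p : Fin n × Fin n // p.1 < p.2},
          (if ω p then α (σ p.1.1) (σ p.1.2) / n
           else 1 - α (σ p.1.1) (σ p.1.2) / n)) *
      (1 / (2 * (k : ℝ)) *
        ∑ u ∈ Finset.univ.filter (fun u : Fin k → Fin n => Function.Injective u),
          ∏ i : Fin k, edgeInd ω (u i) (u (i + 1)))
      = 1 / (2 * (k : ℝ)) *
        ∑ u ∈ Finset.univ.filter (fun u : Fin k → Fin n => Function.Injective u),
          ∑ σ : Fin n → Fin 2, (∏ v : Fin n, π (σ v)) *
            ∑ ω : {p : Fin n × Fin n // p.1 < p.2} → Bool,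
              (∏ p : {p : Fin n × Fin n // p.1 < p.2},
                (if ω p then α (σ p.1.1) (σ p.1.2) / n
                 else 1 - α (σ p.1.1) (σ p.1.2) / n)) *
              ∏ i : Fin k, edgeInd ω (u i) (u (i + 1)) := by
    calc _ = ∑ σ : Fin n → Fin 2, ∑ ω : {p : Fin n × Fin n // p.1 < p.2} → Bool,
          ∑ u ∈ Finset.univ.filter (fun u : Fin k → Fin n => Function.Injective u),
            1 / (2 * (k : ℝ)) * ((∏ v : Fin n, π (σ v)) *
              ((∏ p : {p : Fin n × Fin n // p.1 < p.2},
                (if ω p then α (σ p.1.1) (σ p.1.2) / n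
                 else 1 - α (σ p.1.1) (σ p.1.2) / n)) *
              ∏ i : Fin k, edgeInd ω (u i) (u (i + 1)))) := by
          apply Finset.sum_congr rfl
          intro σ _
          apply Finset.sum_congr rfl
          intro ω _
          rw [Finset.mul_sum, Finset.mul_sum]
          apply Finset.sum_congr rfl
          intro u _
          ring
      _ = ∑ u ∈ Finset.univ.filter (fun u : Fin k → Fin n => Function.Injective u),
          ∑ σ : Fin n → Fin 2, ∑ ω : {p : Fin n × Fin n // p.1 < p.2} → Bool,
            1 / (2 * (k : ℝ)) * ((∏ v : Fin n, π (σ v)) *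
              ((∏ p : {p : Fin n × Fin n // p.1 < p.2},
                (if ω p then α (σ p.1.1) (σ p.1.2) / n
                 else 1 - α (σ p.1.1) (σ p.1.2) / n)) *
              ∏ i : Fin k, edgeInd ω (u i) (u (i + 1)))) := by
          rw [Finset.sum_congr rfl (fun (σ : Fin n → Fin 2) _ => Finset.sum_comm)]
          exact Finset.sum_comm
      _ = _ := by
          rw [Finset.mul_sum]
          apply Finset.sum_congr rfl
          intro u _
          rw [Finset.mul_sum]
          apply Finset.sum_congr rfl
          intro σ _
          rw [Finset.mul_sum, Finset.mul_sum]
  rw [swap]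
  rw [Finset.sum_congr rfl (fun u hu => main u (by simpa using hu))]
  rw [Finset.sum_const, nsmul_eq_mul]
  have hcard : (Finset.univ.filter (fun u : Fin k → Fin n => Function.Injective u)).card
      = n.descFactorial k := by
    rw [← Fintype.card_subtype]
    rw [Fintype.card_congr (Equiv.subtypeInjectiveEquivEmbedding (Fin k) (Fin n))]
    rw [Fintype.card_embedding_eq]
    simp
  rw [hcard, Nat.descFactorial_eq_factorial_mul_choose]
  have hkfac : (k.factorial : ℝ) = k * ((k-1).factorial : ℝ) := by
    rw [← Nat.mul_factorial_pred (by omega : k ≠ 0)]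
    push_cast
    ring
  push_cast
  rw [hkfac]
  have hkR : (k : ℝ) ≠ 0 := by positivity
  field_simp

end
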